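/- Let T be a tree, let U ⊆ V(T) be an infinite set of vertices, and let H be the convex hull of U in T. If R is a ray which is a subgraph of H and the set U \ V(R) is finite, then H is almost a ray. -/

import Mathlib

open SimpleGraph

/-- `d` is an ultrametric on `V`: a metric satisfying the strong triangle inequality. -/
def IsUltrametricOn {V : Type*} (d : V → V → ℝ) : Prop :=
  (∀ x y, 0 ≤ d x y) ∧ (∀ x y, d x y = d y x) ∧
    (∀ x y, d x y = 0 ↔ x = y) ∧
    ∀ x y z, d x y ≤ max (d x z) (d z y)

/-- The vertex labeling `l` of the graph `G` is non-degenerate: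
`max {l u, l v} > 0` for every edge `{u, v}`. -/
def NondegenerateLabeling {V : Type*} (G : SimpleGraph V) (l : V → ℝ) : Prop :=
  ∀ u v, G.Adj u v → 0 < max (l u) (l v)

/-- `d` is the function `d_l` generated by the vertex labeling `l` on the tree `G`:
`d u u = 0`, and for `u ≠ v`, `d u v` is the maximum of the labels of the vertices of
the (unique) path joining `u` and `v`. -/
def IsLabelDist {V : Type*} (G : SimpleGraph V) (l : V → ℝ) (d : V → V → ℝ) : Prop :=
  (∀ u, d u u = 0) ∧
    ∀ u v : V, u ≠ v → ∀ p : G.Walk u v, p.IsPath →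
      IsGreatest (l '' {w | w ∈ p.support}) (d u v)

/-- `x` is a Cauchy sequence with respect to the distance function `d`. -/
def CauchyWith {V : Type*} (d : V → V → ℝ) (x : ℕ → V) : Prop :=
  ∀ ε : ℝ, 0 < ε → ∃ N : ℕ, ∀ m ≥ N, ∀ n ≥ N, d (x m) (x n) < ε

/-- The set `A` is totally bounded with respect to the distance function `d`:
for every `r > 0` it is covered by finitely many open balls of radius `r` centered in `A`. -/
def TotallyBoundedWith {V : Type*} (d : V → V → ℝ) (A : Set V) : Prop :=
  ∀ r : ℝ, 0 < r → ∃ s : Finset V, ↑s ⊆ A ∧ ∀ x ∈ A, ∃ c ∈ s, d c x < r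

/-- The space `V` with distance `d` is compact: every cover of `V` by open balls
(given by center–radius pairs) contains a finite subcover. -/
def CompactWith {V : Type*} (d : V → V → ℝ) : Prop :=
  ∀ F : Set (V × ℝ), (∀ x : V, ∃ p ∈ F, d p.1 x < p.2) →
    ∃ s : Finset (V × ℝ), ↑s ⊆ F ∧ ∀ x : V, ∃ p ∈ s, d p.1 x < p.2

/-- The subgraph `R` of `G` is a ray: its vertices can be enumerated as a sequence
`f 0, f 1, …` of pairwise distinct vertices, with edges exactly `{f n, f (n+1)}`. -/
def IsRaySubgraph {V : Type*} {G : SimpleGraph V} (R : G.Subgraph) : Prop :=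
  ∃ f : ℕ → V, Function.Injective f ∧ R.verts = Set.range f ∧
    ∀ x y, R.Adj x y ↔ ∃ n, (x = f n ∧ y = f (n + 1)) ∨ (x = f (n + 1) ∧ y = f n)

/-- The subgraph `T₀` of `G` is a finite subtree. -/
def IsFiniteSubtree {V : Type*} {G : SimpleGraph V} (T₀ : G.Subgraph) : Prop :=
  T₀.verts.Finite ∧ T₀.coe.IsTree

/-- The subgraph `H` of `G` is almost a ray: `H` is the union of a ray and a finite subtree. -/
def IsAlmostRaySubgraph {V : Type*} {G : SimpleGraph V} (H : G.Subgraph) : Prop :=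
  ∃ R T₀ : G.Subgraph, IsRaySubgraph R ∧ IsFiniteSubtree T₀ ∧ T₀ ⊔ R = H

/-- The graph `G` is almost a ray: `G` is the union of a ray and a finite subtree. -/
def IsAlmostRayGraph {V : Type*} (G : SimpleGraph V) : Prop :=
  ∃ R T₀ : G.Subgraph, IsRaySubgraph R ∧ IsFiniteSubtree T₀ ∧ T₀ ⊔ R = ⊤

/-- `H` is the convex hull of the vertex set `A` in `G`: a subtree containing `A`
which is a subgraph of every subtree of `G` containing `A`. -/
def IsConvexHullSubtree {V : Type*} (G : SimpleGraph V) (A : Set V) (H : G.Subgraph) : Prop :=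
  H.coe.IsTree ∧ A ⊆ H.verts ∧
    ∀ H' : G.Subgraph, H'.coe.IsTree → A ⊆ H'.verts → H ≤ H'



section Aux

variable {V : Type*} {G : SimpleGraph V}

lemma subgraph_isAcyclic (hG : G.IsAcyclic) (H : G.Subgraph) : H.coe.IsAcyclic := by
  intro v p hp
  exact hG (p.map H.hom) (hp.map Subgraph.hom_injective)

lemma ray_connected {R : G.Subgraph} (hR : IsRaySubgraph R) : R.Connected := by
  obtain ⟨f, hinj, hverts, hadj⟩ := hR
  have hmem : ∀ n, f n ∈ R.verts := fun n => hverts ▸ Set.mem_range_self n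
  have reach : ∀ n, R.coe.Reachable ⟨f 0, hmem 0⟩ ⟨f n, hmem n⟩ := by
    intro n
    induction n with
    | zero => exact Reachable.refl _
    | succ n ih =>
      refine ih.trans (SimpleGraph.Adj.reachable ?_)
      exact (hadj (f n) (f (n + 1))).2 ⟨n, Or.inl ⟨rfl, rfl⟩⟩
  constructor
  haveI : Nonempty R.verts := ⟨⟨f 0, hmem 0⟩⟩
  refine ⟨?_⟩
  rintro ⟨x, hx⟩ ⟨y, hy⟩
  obtain ⟨m, hm⟩ : x ∈ Set.range f := hverts ▸ hx
  obtain ⟨n, hn⟩ : y ∈ Set.range f := hverts ▸ hy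
  have hx' : (⟨x, hx⟩ : R.verts) = ⟨f m, hmem m⟩ := Subtype.ext hm.symm
  have hy' : (⟨y, hy⟩ : R.verts) = ⟨f n, hmem n⟩ := Subtype.ext hn.symm
  rw [hx', hy']
  exact (reach m).symm.trans (reach n)

lemma exists_conn_sub {H : G.Subgraph} (hHtree : H.coe.IsTree) {v0 u : V}
    (hv0 : v0 ∈ H.verts) (hu : u ∈ H.verts) :
    ∃ S : G.Subgraph, S ≤ H ∧ S.Connected ∧ v0 ∈ S.verts ∧ u ∈ S.verts ∧ S.verts.Finite := by
  obtain ⟨p⟩ := hHtree.isConnected ⟨v0, hv0⟩ ⟨u, hu⟩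
  refine ⟨(p.map H.hom).toSubgraph, ?_, ?_, ?_, ?_, ?_⟩
  · rw [Walk.toSubgraph_map]; exact Subgraph.coeSubgraph_le _
  · exact (p.map H.hom).toSubgraph_connected
  · exact (p.map H.hom).start_mem_verts_toSubgraph
  · exact (p.map H.hom).end_mem_verts_toSubgraph
  · rw [Walk.verts_toSubgraph]; exact List.finite_toSet _

lemma finset_sup_conn (H : G.Subgraph) (W : V → G.Subgraph) (B : G.Subgraph) (v0 : V)
    (hB : B ≤ H ∧ B.Connected ∧ v0 ∈ B.verts ∧ B.verts.Finite)
    (s : Finset V)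
    (hW : ∀ u, W u ≤ H ∧ (W u).Connected ∧ v0 ∈ (W u).verts ∧ (W u).verts.Finite) :
    (s.sup W ⊔ B) ≤ H ∧ (s.sup W ⊔ B).Connected ∧ v0 ∈ (s.sup W ⊔ B).verts ∧
      (s.sup W ⊔ B).verts.Finite := by
  classical
  induction s using Finset.induction with
  | empty => simpa using hB
  | insert a s ha ih =>
    rw [Finset.sup_insert, sup_assoc]
    obtain ⟨ih1, ih2, ih3, ih4⟩ := ih
    obtain ⟨h1, h2, h3, h4⟩ := hW _
    refine ⟨sup_le h1 ih1, Subgraph.connected_sup h2.preconnected ih2.preconnected ⟨v0, ?_⟩, ?_, ?_⟩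
    · rw [Subgraph.verts_inf]; exact ⟨h3, ih3⟩
    · rw [Subgraph.verts_sup]; exact Or.inr ih3
    · rw [Subgraph.verts_sup]; exact h4.union ih4

end Aux

/-- Let `H` be the convex hull of an infinite set `U` of vertices of a tree
`T`. If `R` is a ray which is a subgraph of `H` and `U \\ V(R)` is finite, then `H` is
almost a ray. -/
theorem stmt15 {V : Type*} (G : SimpleGraph V) (hG : G.IsTree)
    (U : Set V) (hU : U.Infinite)
    (H : G.Subgraph) (hH : IsConvexHullSubtree G U H)
    (R : G.Subgraph) (hR : IsRaySubgraph R) (hRH : R ≤ H)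
    (hfin : (U \ R.verts).Finite) :
    IsAlmostRaySubgraph H := by
  classical
  obtain ⟨hHtree, hUH, hmin⟩ := hH
  have hRconn : R.Connected := ray_connected hR
  obtain ⟨f, hinj, hverts, hadj⟩ := hR
  have hf0R : f 0 ∈ R.verts := hverts ▸ Set.mem_range_self 0
  have hf0H : f 0 ∈ H.verts := hRH.1 hf0R
  have hex : ∀ u : V, ∃ S : G.Subgraph, S ≤ H ∧ S.Connected ∧ f 0 ∈ S.verts ∧
      (u ∈ H.verts → u ∈ S.verts) ∧ S.verts.Finite := by
    intro u
    by_cases hu : u ∈ H.verts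
    · obtain ⟨S, h1, h2, h3, h4, h5⟩ := exists_conn_sub hHtree hf0H hu
      exact ⟨S, h1, h2, h3, fun _ => h4, h5⟩
    · obtain ⟨S, h1, h2, h3, h4, h5⟩ := exists_conn_sub hHtree hf0H hf0H
      exact ⟨S, h1, h2, h3, fun h => absurd h hu, h5⟩
  choose W hW1 hW2 hW3 hW4 hW5 using hex
  set F : Finset V := hfin.toFinset with hF
  set T₀ : G.Subgraph := F.sup W ⊔ W (f 0) with hT₀
  obtain ⟨hT1, hT2, hT3, hT4⟩ :=
    finset_sup_conn H W (W (f 0)) (f 0) ⟨hW1 _, hW2 _, hW3 _, hW5 _⟩ F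
      (fun u => ⟨hW1 u, hW2 u, hW3 u, hW5 u⟩)
  have hTacyclic : T₀.coe.IsAcyclic := subgraph_isAcyclic hG.2 T₀
  have hsupconn : (T₀ ⊔ R).Connected :=
    Subgraph.connected_sup hT2.preconnected hRconn.preconnected ⟨f 0, by rw [Subgraph.verts_inf]; exact ⟨hT3, hf0R⟩⟩
  have hsuptree : (T₀ ⊔ R).coe.IsTree := ⟨hsupconn.coe, subgraph_isAcyclic hG.2 _⟩
  have hUsub : U ⊆ (T₀ ⊔ R).verts := by
    intro u hu
    rw [Subgraph.verts_sup]
    by_cases h : u ∈ R.verts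
    · exact Or.inr h
    · left
      have hmemF : u ∈ F := hfin.mem_toFinset.2 ⟨hu, h⟩
      have hle : W u ≤ T₀ := le_trans (Finset.le_sup hmemF) le_sup_left
      exact hle.1 (hW4 u (hUH hu))
  have hle : T₀ ⊔ R ≤ H := sup_le hT1 hRH
  have heq : T₀ ⊔ R = H := le_antisymm hle (hmin _ hsuptree hUsub)
  exact ⟨R, T₀, ⟨f, hinj, hverts, hadj⟩, ⟨hT4, hT2.coe, hTacyclic⟩, heq⟩
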